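/- Let h, K, t be three non-collinear points of ℝ². Let H be a point of line hK with H ∉ {h,K}, D a point of line ht with D ∉ {h,t}, and G a point of line Kt with G ∉ {K,t}. If the signed ratios satisfy Dh/Dt = (Hh/HK)·(GK/Gt), then the three points H, D, G are collinear (converse of Menelaus' theorem). -/

import Mathlib

noncomputable section

open EuclideanGeometry

abbrev Pt : Type := EuclideanSpace ℝ (Fin 2)

/-- The affine line through two points of the Euclidean plane. -/
def lineThrough (x y : Pt) : AffineSubspace ℝ Pt := affineSpan ℝ {x, y}

/-- A subset of the plane is a line if it is the affine span of two distinct points. -/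
def IsLine (s : AffineSubspace ℝ Pt) : Prop := ∃ x y : Pt, x ≠ y ∧ s = lineThrough x y

/-- Converse of Menelaus' theorem, with signed ratios. -/
theorem menelaus_converse
    (h K t : Pt) (hncol : ¬ Collinear ℝ ({h, K, t} : Set Pt))
    (H D G : Pt)
    (hH : H ∈ lineThrough h K) (hHh : H ≠ h) (hHK : H ≠ K)
    (hD : D ∈ lineThrough h t) (hDh : D ≠ h) (hDt : D ≠ t)
    (hG : G ∈ lineThrough K t) (hGK : G ≠ K) (hGt : G ≠ t)
    (r₁ r₂ r₃ : ℝ)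
    (hr₁ : h - D = r₁ • (t - D))
    (hr₂ : h - H = r₂ • (K - H))
    (hr₃ : K - G = r₃ • (t - G))
    (hratio : r₁ = r₂ * r₃) :
    Collinear ℝ ({H, D, G} : Set Pt) := by
  subst hratio
  have hhK : h ≠ K := by
    rintro rfl
    exact hncol (by
      have hs : ({h, h, t} : Set Pt) ⊆ {h, t} := by intro x; simp only [Set.mem_insert_iff, Set.mem_singleton_iff]; tauto
      exact (collinear_pair ℝ h t).subset hs)
  have hht : h ≠ t := by
    rintro rfl
    exact hncol (by
      have hs : ({h, K, h} : Set Pt) ⊆ {h, K} := by intro x; simp only [Set.mem_insert_iff, Set.mem_singleton_iff]; tauto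
      exact (collinear_pair ℝ h K).subset hs)
  have hKt : K ≠ t := by
    rintro rfl
    exact hncol (by
      have hs : ({h, K, K} : Set Pt) ⊆ {h, K} := by intro x; simp only [Set.mem_insert_iff, Set.mem_singleton_iff]; tauto
      exact (collinear_pair ℝ h K).subset hs)
  have h2 : r₂ ≠ 1 := by
    rintro rfl
    rw [one_smul] at hr₂
    exact hhK (sub_left_injective hr₂)
  have h3 : r₃ ≠ 1 := by
    rintro rfl
    rw [one_smul] at hr₃
    exact hKt (sub_left_injective hr₃)
  have h1 : r₂ * r₃ ≠ 1 := by
    intro hone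
    rw [hone, one_smul] at hr₁
    exact hht (sub_left_injective hr₁)
  have h20 : r₂ ≠ 0 := by
    rintro rfl
    rw [zero_mul, zero_smul] at hr₁
    exact hDh (sub_eq_zero.mp hr₁).symm
  -- explicit formulas
  have eD : D = (1 - r₂ * r₃)⁻¹ • (h - (r₂ * r₃) • t) := by
    have e : (1 - r₂ * r₃) • D = h - (r₂ * r₃) • t := by
      rw [sub_smul, one_smul]
      rw [smul_sub] at hr₁
      linear_combination (norm := abel) -hr₁
    rw [← e, inv_smul_smul₀ (sub_ne_zero.mpr (Ne.symm h1))]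
  have eH : H = (1 - r₂)⁻¹ • (h - r₂ • K) := by
    have e : (1 - r₂) • H = h - r₂ • K := by
      rw [sub_smul, one_smul]
      rw [smul_sub] at hr₂
      linear_combination (norm := abel) -hr₂
    rw [← e, inv_smul_smul₀ (sub_ne_zero.mpr (Ne.symm h2))]
  have eG : G = (1 - r₃)⁻¹ • (K - r₃ • t) := by
    have e : (1 - r₃) • G = K - r₃ • t := by
      rw [sub_smul, one_smul]
      rw [smul_sub] at hr₃
      linear_combination (norm := abel) -hr₃
    rw [← e, inv_smul_smul₀ (sub_ne_zero.mpr (Ne.symm h3))]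
  -- the collinearity
  have key : G - D = ((r₂ - 1) / (r₂ * (1 - r₃))) • (H - D) := by
    have n1 : (1 : ℝ) - r₂ * r₃ ≠ 0 := sub_ne_zero.mpr (Ne.symm h1)
    have n2 : (1 : ℝ) - r₂ ≠ 0 := sub_ne_zero.mpr (Ne.symm h2)
    have n3 : (1 : ℝ) - r₃ ≠ 0 := sub_ne_zero.mpr (Ne.symm h3)
    rw [eD, eH, eG]
    have n4 : (1 : ℝ) - r₃ * r₂ ≠ 0 := by rwa [mul_comm]
    match_scalars <;> field_simp <;> ring
  apply (collinear_iff_of_mem (show D ∈ ({H, D, G} : Set Pt) by simp)).mpr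
  refine ⟨H - D, ?_⟩
  intro p hp
  rcases hp with rfl | rfl | rfl
  · exact ⟨1, by simp⟩
  · exact ⟨0, by simp⟩
  · exact ⟨(r₂ - 1) / (r₂ * (1 - r₃)), by
      rw [← key]; simp⟩
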